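/- Let λ ∈ ℝ^n have all positive entries, λ_1 the largest, and 1 ≤ l < n. Then for each i ≠ 1: 4·(S_{n-2;1i}(λ)·S_l(λ) − S_n(λ)·S_{l-2;1i}(λ)) − (3/λ_1)·(S_{n-1;i}(λ)·S_l(λ) − S_n(λ)·S_{l-1;i}(λ)) > 0. Equivalently, S_{n-2;1i}·S_l − S_n·S_{l-2;1i} − (3/(4λ_1))·(S_{n-1;i}·S_l − S_n·S_{l-1;i}) > 0. -/

import Mathlib

open Finset

/-- `S m lam` : the `m`-th elementary symmetric function of the entries of `lam`,
with the conventions `S 0 = 1` and `S m = 0` for `m < 0` (and for `m > n`). -/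
noncomputable def S {n : ℕ} (m : ℤ) (lam : Fin n → ℝ) : ℝ :=
  if 0 ≤ m then
    ∑ A ∈ Finset.powersetCard m.toNat (Finset.univ : Finset (Fin n)), ∏ j ∈ A, lam j
  else 0

lemma S_update_eq {n : ℕ} (lam : Fin n → ℝ) (k : Fin n) (r : ℕ) :
    (∑ A ∈ Finset.powersetCard r (Finset.univ : Finset (Fin n)),
        ∏ j ∈ A, Function.update lam k 0 j)
      = ∑ A ∈ Finset.powersetCard r ((Finset.univ : Finset (Fin n)).erase k),
          ∏ j ∈ A, lam j := by
  rw [← Finset.sum_filter_add_sum_filter_not (Finset.powersetCard r Finset.univ)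
      (fun A => k ∈ A)]
  have h1 : ∑ A ∈ (Finset.powersetCard r (Finset.univ : Finset (Fin n))).filter
      (fun A => k ∈ A), ∏ j ∈ A, Function.update lam k 0 j = 0 := by
    refine Finset.sum_eq_zero fun A hA => ?_
    exact Finset.prod_eq_zero (Finset.mem_filter.1 hA).2 (Function.update_self k 0 lam)
  have h2 : (Finset.powersetCard r (Finset.univ : Finset (Fin n))).filter
      (fun A => k ∉ A) = Finset.powersetCard r ((Finset.univ : Finset (Fin n)).erase k) := by
    ext A
    simp only [Finset.mem_filter, Finset.mem_powersetCard, Finset.subset_erase]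
    tauto
  rw [h1, zero_add, h2]
  refine Finset.sum_congr rfl fun A hA => Finset.prod_congr rfl fun j hj => ?_
  rw [Finset.mem_powersetCard, Finset.subset_erase] at hA
  exact Function.update_of_ne (fun h : j = k => hA.1.2 (h ▸ hj)) 0 lam

lemma S_split {n : ℕ} (lam : Fin n → ℝ) (k : Fin n) (r : ℕ) :
    (∑ A ∈ Finset.powersetCard (r+1) (Finset.univ : Finset (Fin n)), ∏ j ∈ A, lam j)
      = (∑ A ∈ Finset.powersetCard (r+1) ((Finset.univ : Finset (Fin n)).erase k),
          ∏ j ∈ A, lam j)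
        + lam k * ∑ A ∈ Finset.powersetCard r ((Finset.univ : Finset (Fin n)).erase k),
            ∏ j ∈ A, lam j := by
  have hk : k ∉ (Finset.univ : Finset (Fin n)).erase k := Finset.notMem_erase _ _
  conv_lhs => rw [show (Finset.univ : Finset (Fin n))
    = insert k ((Finset.univ : Finset (Fin n)).erase k) from
      (Finset.insert_erase (Finset.mem_univ k)).symm]
  rw [Finset.powersetCard_succ_insert hk]
  have hdisj : Disjoint (Finset.powersetCard (r+1) ((Finset.univ : Finset (Fin n)).erase k))
      ((Finset.powersetCard r ((Finset.univ : Finset (Fin n)).erase k)).image (insert k)) := by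
    rw [Finset.disjoint_left]
    intro A hA hA'
    rw [Finset.mem_powersetCard] at hA
    obtain ⟨B, hB, rfl⟩ := Finset.mem_image.1 hA'
    exact (Finset.subset_erase.1 hA.1).2 (Finset.mem_insert_self k B)
  rw [Finset.sum_union hdisj]
  congr 1
  rw [Finset.sum_image, Finset.mul_sum]
  · refine Finset.sum_congr rfl fun A hA => ?_
    rw [Finset.mem_powersetCard, Finset.subset_erase] at hA
    rw [Finset.prod_insert hA.1.2]
  · intro A hA B hB hAB
    rw [Finset.mem_coe, Finset.mem_powersetCard, Finset.subset_erase] at hA hB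
    have : (insert k A).erase k = (insert k B).erase k := by rw [hAB]
    rwa [Finset.erase_insert hA.1.2, Finset.erase_insert hB.1.2] at this

lemma S_rec {n : ℕ} (lam : Fin n → ℝ) (k : Fin n) (m : ℤ) :
    S m lam = S m (Function.update lam k 0) + lam k * S (m-1) (Function.update lam k 0) := by
  by_cases h0 : 0 ≤ m
  · by_cases h1 : 1 ≤ m
    · have ht : m.toNat = (m-1).toNat + 1 := by omega
      unfold S
      rw [if_pos h0, if_pos h0, if_pos (by omega : (0:ℤ) ≤ m - 1)]
      rw [S_update_eq, S_update_eq, ht, S_split lam k]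
    · have hm : m = 0 := by omega
      subst hm
      simp [S]
  · simp [S, h0, show ¬ (0:ℤ) ≤ m - 1 by omega, show ¬ (1:ℤ) ≤ m by omega]

lemma S_vanish {n : ℕ} (lam : Fin n → ℝ) (k₁ k₂ : Fin n) (hne : k₁ ≠ k₂)
    (h1 : lam k₁ = 0) (h2 : lam k₂ = 0) (m : ℤ) (hm : (n:ℤ) - 2 < m) : S m lam = 0 := by
  unfold S
  split_ifs with h
  · refine Finset.sum_eq_zero fun A hA => ?_
    rw [Finset.mem_powersetCard] at hA
    have : k₁ ∈ A ∨ k₂ ∈ A := by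
      by_contra hc
      push_neg at hc
      have hsub : A ⊆ ((Finset.univ : Finset (Fin n)).erase k₁).erase k₂ := by
        intro x hx
        refine Finset.mem_erase.2 ⟨fun h => hc.2 (h ▸ hx), Finset.mem_erase.2
          ⟨fun h => hc.1 (h ▸ hx), Finset.mem_univ x⟩⟩
      have hcard := Finset.card_le_card hsub
      rw [Finset.card_erase_of_mem (Finset.mem_erase.2 ⟨Ne.symm hne, Finset.mem_univ _⟩),
        Finset.card_erase_of_mem (Finset.mem_univ _), Finset.card_univ,
        Fintype.card_fin] at hcard
      omega
    rcases this with h | h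
    · exact Finset.prod_eq_zero h h1
    · exact Finset.prod_eq_zero h h2
  · rfl

lemma S_nonneg {n : ℕ} (lam : Fin n → ℝ) (h0 : ∀ j, 0 ≤ lam j) (m : ℤ) : 0 ≤ S m lam := by
  unfold S
  split_ifs
  · exact Finset.sum_nonneg fun A _ => Finset.prod_nonneg fun j _ => h0 j
  · exact le_refl 0

lemma S_pos {n : ℕ} (lam : Fin n → ℝ) (h0 : ∀ j, 0 ≤ lam j) (m : ℤ) (hm : 0 ≤ m)
    (B : Finset (Fin n)) (hB : B.card = m.toNat) (hBpos : ∀ j ∈ B, 0 < lam j) :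
    0 < S m lam := by
  unfold S
  rw [if_pos hm]
  have hBmem : B ∈ Finset.powersetCard m.toNat (Finset.univ : Finset (Fin n)) :=
    Finset.mem_powersetCard.2 ⟨Finset.subset_univ _, hB⟩
  exact lt_of_lt_of_le (Finset.prod_pos hBpos)
    (Finset.single_le_sum (f := fun A => ∏ j ∈ A, lam j)
      (fun A _ => Finset.prod_nonneg fun j _ => h0 j) hBmem)

theorem stmt9 (m : ℕ) (lam : Fin (m + 2) → ℝ)
    (hdec : ∀ i j : Fin (m + 2), i ≤ j → lam j ≤ lam i) (hpos : ∀ j, 0 < lam j)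
    (l : ℤ) (hl1 : 1 ≤ l) (hln : l < m + 2) (i : Fin (m + 2)) (hi : i ≠ 0) :
    0 < 4 * (S (m : ℤ) (Function.update (Function.update lam 0 0) i 0) * S l lam
          - S ((m : ℤ) + 2) lam
            * S (l - 2) (Function.update (Function.update lam 0 0) i 0))
        - (3 / lam 0) * (S ((m : ℤ) + 1) (Function.update lam i 0) * S l lam
          - S ((m : ℤ) + 2) lam * S (l - 1) (Function.update lam i 0)) := by
  have hcomm : Function.update (Function.update lam 0 0) i 0
      = Function.update (Function.update lam i 0) 0 0 :=
    (Function.update_comm hi 0 0 lam).symm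
  rw [hcomm]
  set lam' := Function.update lam i 0 with hldef'
  set lam'' := Function.update lam' 0 0 with hldef''
  have hl'0 : lam' 0 = lam 0 := Function.update_of_ne (Ne.symm hi) 0 lam
  have h''0 : lam'' 0 = 0 := Function.update_self 0 0 lam'
  have h''i : lam'' i = 0 := by
    rw [hldef'', Function.update_of_ne hi, hldef', Function.update_self]
  have h''nonneg : ∀ j, 0 ≤ lam'' j := by
    intro j
    rcases eq_or_ne j 0 with rfl | hj0
    · rw [h''0]
    · rw [hldef'', Function.update_of_ne hj0]
      rcases eq_or_ne j i with rfl | hji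
      · rw [hldef', Function.update_self]
      · rw [hldef', Function.update_of_ne hji]; exact (hpos j).le
  -- the set of "other" indices
  set B := (((Finset.univ : Finset (Fin (m+2))).erase 0).erase i) with hBdef
  have hBcard : B.card = m := by
    rw [hBdef, Finset.card_erase_of_mem (Finset.mem_erase.2 ⟨hi, Finset.mem_univ _⟩),
      Finset.card_erase_of_mem (Finset.mem_univ _), Finset.card_univ, Fintype.card_fin]
    omega
  have hBpos : ∀ j ∈ B, 0 < lam'' j := by
    intro j hj
    rw [hBdef, Finset.mem_erase, Finset.mem_erase] at hj
    rw [hldef'', Function.update_of_ne hj.2.1, hldef', Function.update_of_ne hj.1]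
    exact hpos j
  have hC : 0 < S (m : ℤ) lam'' := by
    refine S_pos lam'' h''nonneg m (by positivity) B (by simp [hBcard]) hBpos
  have hle : (l - 1).toNat ≤ B.card := by rw [hBcard]; omega
  obtain ⟨t, ht, htcard⟩ := Finset.exists_subset_card_eq hle
  have hY : 0 < S (l - 1) lam'' :=
    S_pos lam'' h''nonneg (l - 1) (by omega) t htcard (fun j hj => hBpos j (ht hj))
  have hX : 0 ≤ S l lam'' := S_nonneg lam'' h''nonneg l
  have hv2 : S ((m : ℤ) + 2) lam'' = 0 :=
    S_vanish lam'' 0 i (Ne.symm hi) h''0 h''i _ (by push_cast; omega)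
  have hv1 : S ((m : ℤ) + 1) lam'' = 0 :=
    S_vanish lam'' 0 i (Ne.symm hi) h''0 h''i _ (by push_cast; omega)
  have r1 := S_rec lam i l
  have r2 := S_rec lam' 0 l
  have r3 := S_rec lam' 0 (l - 1)
  rw [show l - 1 - 1 = l - 2 from by ring] at r3
  have r4 := S_rec lam i ((m : ℤ) + 2)
  rw [show (m : ℤ) + 2 - 1 = (m : ℤ) + 1 from by ring] at r4
  have r5 := S_rec lam' 0 ((m : ℤ) + 2)
  rw [show (m : ℤ) + 2 - 1 = (m : ℤ) + 1 from by ring] at r5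
  have r6 := S_rec lam' 0 ((m : ℤ) + 1)
  rw [show (m : ℤ) + 1 - 1 = (m : ℤ) from by ring] at r6
  rw [hl'0] at r2 r3 r5 r6
  rw [← hldef''] at r2 r3 r5 r6
  rw [← hldef'] at r1 r4
  have hS1 : S ((m : ℤ) + 1) lam' = lam 0 * S (m : ℤ) lam'' := by
    rw [r6, hv1, zero_add]
  have hSn : S ((m : ℤ) + 2) lam = lam i * (lam 0 * S (m : ℤ) lam'') := by
    rw [r4, r5, hv2, hv1, hS1]; ring
  have hS2 : S (l - 1) lam' = S (l - 1) lam'' + lam 0 * S (l - 2) lam'' := r3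
  have hSL : S l lam = S l lam'' + lam 0 * S (l - 1) lam''
      + lam i * (S (l - 1) lam'' + lam 0 * S (l - 2) lam'') := by
    rw [r1, r2, hS2]
  rw [hSL, hSn, hS1, hS2]
  have ha : lam 0 ≠ 0 := (hpos 0).ne'
  have key : 4 * (S (m : ℤ) lam'' * (S l lam'' + lam 0 * S (l - 1) lam''
        + lam i * (S (l - 1) lam'' + lam 0 * S (l - 2) lam''))
      - lam i * (lam 0 * S (m : ℤ) lam'') * S (l - 2) lam'')
      - 3 / lam 0 * (lam 0 * S (m : ℤ) lam'' * (S l lam'' + lam 0 * S (l - 1) lam''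
        + lam i * (S (l - 1) lam'' + lam 0 * S (l - 2) lam''))
      - lam i * (lam 0 * S (m : ℤ) lam'')
        * (S (l - 1) lam'' + lam 0 * S (l - 2) lam''))
      = S (m : ℤ) lam'' * (S l lam'' + (lam 0 + 4 * lam i) * S (l - 1) lam'') := by
    field_simp
    ring
  rw [key]
  have hcoef : 0 < lam 0 + 4 * lam i := by nlinarith [hpos 0, hpos i]
  nlinarith [mul_pos hcoef hY, mul_pos hC (by nlinarith [mul_pos hcoef hY] :
    (0:ℝ) < S l lam'' + (lam 0 + 4 * lam i) * S (l - 1) lam'')]
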